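/- Let d ≥ 1 and for each i ∈ {1,…,d} let μ_i, ν_i be probability measures on ℝ with finite first moments such that μ_i ⪯_c ν_i in convex order. Then the product measures satisfy μ_1 ⊗ … ⊗ μ_d ⪯_c ν_1 ⊗ … ⊗ ν_d in convex order on ℝ^d, i.e., ∫ f d(μ_1 ⊗ … ⊗ μ_d) ≤ ∫ f d(ν_1 ⊗ … ⊗ ν_d) for every convex function f : ℝ^d → ℝ integrable with respect to both product measures. -/

import Mathlib

open MeasureTheory

noncomputable section

variable {E : Type*} [NormedAddCommGroup E] [NormedSpace ℝ E]

lemma exists_subgradient (f : E → ℝ) (hf : ConvexOn ℝ Set.univ f) (hc : Continuous f)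
    (x : E) : ∃ L : E →L[ℝ] ℝ, ∀ y, f x + L (y - x) ≤ f y := by
  set s : Set (E × ℝ) := {p | f p.1 < p.2} with hs
  have hconv : Convex ℝ s := by
    intro p hp q hq a b ha hb hab
    simp only [hs, Set.mem_setOf_eq] at *
    calc f (a • p.1 + b • q.1) ≤ a * f p.1 + b * f q.1 :=
          hf.2 (Set.mem_univ _) (Set.mem_univ _) ha hb hab
    _ < a * p.2 + b * q.2 := by
        rcases ha.eq_or_lt with h | h
        · rcases hb.eq_or_lt with h' | h'
          · exfalso; rw [← h, ← h'] at hab; simpa using hab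
          · simp only [← h]; simpa using (mul_lt_mul_of_pos_left hq h')
        · rcases hb.eq_or_lt with h' | h'
          · simp only [← h']; simpa using (mul_lt_mul_of_pos_left hp h)
          · exact add_lt_add (mul_lt_mul_of_pos_left hp h) (mul_lt_mul_of_pos_left hq h')
    _ = (a • p + b • q).2 := rfl
  have hopen : IsOpen s := isOpen_lt (hc.comp continuous_fst) continuous_snd
  have hx : (x, f x) ∉ s := by simp [hs]
  obtain ⟨ℓ, hℓ⟩ := geometric_hahn_banach_open_point hconv hopen hx
  set β : ℝ := ℓ (0, 1) with hβ
  have hdecomp : ∀ y t, ℓ (y, t) = ℓ (y, 0) + t * β := by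
    intro y t
    have : (y, t) = (y, (0:ℝ)) + t • ((0:E), (1:ℝ)) := by simp
    rw [this, map_add, ℓ.map_smul, smul_eq_mul]
  have hβneg : β < 0 := by
    have h1 := hℓ (x, f x + 1) (by simp [hs])
    rw [hdecomp x (f x + 1), hdecomp x (f x)] at h1
    nlinarith
  have key : ∀ y, ℓ (y, 0) + f y * β ≤ ℓ (x, 0) + f x * β := by
    intro y
    have h2 : ∀ ε > (0:ℝ), ℓ (y, 0) + (f y + ε) * β < ℓ (x, 0) + f x * β := by
      intro ε hε
      have := hℓ (y, f y + ε) (by simp [hs, hε])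
      rwa [hdecomp y (f y + ε), hdecomp x (f x)] at this
    by_contra hcon
    push_neg at hcon
    have hβ' : (0:ℝ) < -β := by linarith
    set δ := (ℓ (y,0) + f y * β - (ℓ (x,0) + f x * β)) with hδ
    have hδpos : 0 < δ := by linarith
    have hεpos : 0 < δ / (2 * (-β)) := by positivity
    have h3 := h2 (δ / (2 * (-β))) hεpos
    have h4 : δ / (2 * (-β)) * β = -(δ/2) := by
      rw [div_mul_eq_mul_div, div_eq_iff (by positivity : (0:ℝ) < 2 * -β).ne']; ring
    rw [add_mul, h4] at h3
    linarith
  -- now define L := fun y => ℓ (y,0) scaled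
  refine ⟨(-β)⁻¹ • ((ℓ.comp (ContinuousLinearMap.inl ℝ E ℝ))), fun y => ?_⟩
  have hy := key y
  have hβ' : (0:ℝ) < -β := by linarith
  have hlin : ℓ ((y - x), 0) = ℓ (y, 0) - ℓ (x, 0) := by
    have : ((y - x, (0:ℝ)) : E × ℝ) = (y, 0) - (x, 0) := by simp
    rw [this, map_sub]
  simp only [ContinuousLinearMap.smul_apply, ContinuousLinearMap.comp_apply,
    ContinuousLinearMap.inl_apply, smul_eq_mul]
  rw [hlin]
  have h6 : ℓ (y,0) - ℓ (x,0) ≤ (f x - f y) * β := by linarith [key y]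
  have hinv : (-β) * (-β)⁻¹ = 1 := mul_inv_cancel₀ (ne_of_gt hβ')
  have hinvpos : 0 < (-β)⁻¹ := inv_pos.mpr hβ'
  have h7 : (-β)⁻¹ * ((f x - f y) * β) = f y - f x := by
    rw [show (-β)⁻¹ * ((f x - f y) * β) = (f y - f x) * (β * β⁻¹) by ring,
      mul_inv_cancel₀ hβneg.ne, mul_one]
  linarith [mul_le_mul_of_nonneg_left h6 (le_of_lt hinvpos)]

lemma pi_map_eval {d : ℕ} (ρ : Fin d → Measure ℝ) (hp : ∀ i, IsProbabilityMeasure (ρ i))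
    (i : Fin d) : (Measure.pi ρ).map (fun x => x i) = ρ i := by
  haveI := hp
  ext s hs
  rw [Measure.map_apply (measurable_pi_apply i) hs]
  have : (fun x : Fin d → ℝ => x i) ⁻¹' s = Set.pi Set.univ (Function.update (fun _ => Set.univ) i s) := by
    ext x
    simp only [Set.mem_preimage, Set.mem_pi, Set.mem_univ, forall_true_left]
    constructor
    · intro h j
      rcases eq_or_ne j i with rfl | hj
      · simpa using h
      · simp [Function.update_of_ne hj]
    · intro h
      have := h i
      simpa using this
  rw [this, Measure.pi_pi]
  rw [Finset.prod_eq_single i]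
  · simp
  · intro j _ hj
    simp [Function.update_of_ne hj]
  · simp

lemma integrable_coord {d : ℕ} (ρ : Fin d → Measure ℝ) (hp : ∀ i, IsProbabilityMeasure (ρ i))
    (hm : ∀ i, Integrable id (ρ i)) (i : Fin d) :
    Integrable (fun x : Fin d → ℝ => x i) (Measure.pi ρ) := by
  haveI := hp
  have h := (hm i)
  rw [← pi_map_eval ρ hp i] at h
  exact (integrable_map_measure aestronglyMeasurable_id (measurable_pi_apply i).aemeasurable).mp h

lemma integrable_lingrowth {d : ℕ} (ρ : Fin d → Measure ℝ) (hp : ∀ i, IsProbabilityMeasure (ρ i))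
    (hm : ∀ i, Integrable id (ρ i)) (f : (Fin d → ℝ) → ℝ) (hf : Continuous f)
    (c : ℝ) (hbd : ∀ x, |f x| ≤ c * (1 + ∑ i, |x i|)) :
    Integrable f (Measure.pi ρ) := by
  haveI := hp
  have hbound : Integrable (fun x : Fin d → ℝ => c * (1 + ∑ i, |x i|)) (Measure.pi ρ) := by
    refine Integrable.const_mul ?_ c
    refine (integrable_const (1:ℝ)).add ?_
    exact integrable_finset_sum _ (fun i _ => (integrable_coord ρ hp hm i).abs)
  exact hbound.mono' hf.aestronglyMeasurable (Filter.Eventually.of_forall fun x => by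
    simpa [Real.norm_eq_abs] using hbd x)

lemma integrable_lingrowth1 (ρ : Measure ℝ) (hp : IsProbabilityMeasure ρ)
    (hm : Integrable id ρ) (f : ℝ → ℝ) (hf : Continuous f)
    (c : ℝ) (hbd : ∀ t, |f t| ≤ c * (1 + |t|)) :
    Integrable f ρ := by
  haveI := hp
  have hbound : Integrable (fun t : ℝ => c * (1 + |t|)) ρ :=
    (((integrable_const (1:ℝ)).add hm.abs).const_mul c)
  exact hbound.mono' hf.aestronglyMeasurable (Filter.Eventually.of_forall fun t => by
    simpa [Real.norm_eq_abs] using hbd t)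

lemma integrable_fst_abs {β : Type*} [MeasurableSpace β] (ρ : Measure ℝ) (P : Measure β)
    [IsProbabilityMeasure ρ] [IsProbabilityMeasure P] (hm : Integrable id ρ) :
    Integrable (fun p : ℝ × β => |p.1|) (ρ.prod P) := by
  have h1 : (ρ.prod P).map Prod.fst = ρ := by
    rw [Measure.map_fst_prod]; simp
  have : Integrable (fun t : ℝ => |t|) ((ρ.prod P).map Prod.fst) := by rw [h1]; exact hm.abs
  exact (integrable_map_measure (continuous_abs.aestronglyMeasurable) measurable_fst.aemeasurable).mp this

lemma integrable_snd_comp {β : Type*} [MeasurableSpace β] (ρ : Measure ℝ) (P : Measure β)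
    [IsProbabilityMeasure ρ] [IsProbabilityMeasure P] {g : β → ℝ} (hg : AEStronglyMeasurable g P)
    (hgi : Integrable g P) :
    Integrable (fun p : ℝ × β => g p.2) (ρ.prod P) := by
  have h1 : (ρ.prod P).map Prod.snd = P := by
    rw [Measure.map_snd_prod]; simp
  have h2 : Integrable g ((ρ.prod P).map Prod.snd) := by rw [h1]; exact hgi
  have h3 : AEStronglyMeasurable g ((ρ.prod P).map Prod.snd) := by rw [h1]; exact hg
  exact (integrable_map_measure h3 measurable_snd.aemeasurable).mp h2

lemma cons_affine {d : ℕ} (a b t t' : ℝ) (y y' : Fin d → ℝ) :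
    (Fin.cons (a * t + b * t') (a • y + b • y') : Fin (d+1) → ℝ)
      = a • (Fin.cons t y : Fin (d+1) → ℝ) + b • (Fin.cons t' y' : Fin (d+1) → ℝ) := by
  funext j
  refine Fin.cases ?_ (fun i => ?_) j <;> simp [smul_eq_mul]

lemma continuous_consf {d : ℕ} (f : (Fin (d+1) → ℝ) → ℝ) (hf : Continuous f) :
    Continuous (fun p : ℝ × (Fin d → ℝ) => f (Fin.cons p.1 p.2)) := by
  refine hf.comp ?_
  refine continuous_pi fun j => ?_
  refine Fin.cases ?_ (fun i => ?_) j
  · simpa using continuous_fst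
  · simpa [Function.comp_def] using (continuous_apply i).comp continuous_snd

lemma integral_pi_succ {d : ℕ} (μ : Fin (d+1) → Measure ℝ)
    (hp : ∀ i, IsProbabilityMeasure (μ i)) (f : (Fin (d+1) → ℝ) → ℝ) :
    ∫ x, f x ∂ Measure.pi μ
      = ∫ p, f (Fin.cons p.1 p.2)
          ∂ ((μ 0).prod (Measure.pi fun j => μ (Fin.succAbove 0 j))) := by
  haveI := hp
  have h := (measurePreserving_piFinSuccAbove μ 0).integral_comp
    (MeasurableEquiv.piFinSuccAbove (fun _ : Fin (d+1) => ℝ) 0).measurableEmbedding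
    (fun p => f ((MeasurableEquiv.piFinSuccAbove (fun _ : Fin (d+1) => ℝ) 0).symm p))
  have h2 : ∀ x : Fin (d+1) → ℝ,
      ((MeasurableEquiv.piFinSuccAbove (fun _ : Fin (d+1) => ℝ) 0).symm
        ((MeasurableEquiv.piFinSuccAbove (fun _ : Fin (d+1) => ℝ) 0) x)) = x :=
    fun x => (MeasurableEquiv.piFinSuccAbove (fun _ : Fin (d+1) => ℝ) 0).symm_apply_apply x
  simp only [h2] at h
  rw [h]
  congr 1
  funext p
  congr 1
  show (Fin.insertNthEquiv (fun _ : Fin (d+1) => ℝ) 0) p = Fin.cons p.1 p.2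
  simp [Fin.insertNthEquiv, Fin.insertNth_zero]

section Approx
variable {d : ℕ}

-- affine function basics
lemma affine_convexOn (L : (Fin d → ℝ) →L[ℝ] ℝ) (q : Fin d → ℝ) (c : ℝ) :
    ConvexOn ℝ Set.univ (fun x => c + L (x - q)) := by
  refine ⟨convex_univ, ?_⟩
  intro x _ y _ a b ha hb hab
  have hq : a • q + b • q = q := by rw [← add_smul, hab, one_smul]
  have hv : a • x + b • y - q = a • (x - q) + b • (y - q) := by
    calc a • x + b • y - q = a • x + b • y - (a • q + b • q) := by rw [hq]
    _ = a • (x - q) + b • (y - q) := by rw [smul_sub, smul_sub]; abel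
  show c + L (a • x + b • y - q) ≤ _
  rw [hv, map_add, L.map_smul, L.map_smul]
  simp only [smul_eq_mul]
  have : a * c + b * c = c := by rw [← add_mul, hab, one_mul]
  linarith [le_of_eq this]

lemma norm_le_sum_abs (x : Fin d → ℝ) : ‖x‖ ≤ ∑ i, |x i| := by
  refine (pi_norm_le_iff_of_nonneg (Finset.sum_nonneg fun i _ => abs_nonneg _)).2 fun i => ?_
  simpa [Real.norm_eq_abs] using Finset.single_le_sum (f := fun j => |x j|)
    (fun j _ => abs_nonneg _) (Finset.mem_univ i)

lemma affine_bd (L : (Fin d → ℝ) →L[ℝ] ℝ) (q : Fin d → ℝ) (c : ℝ) :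
    ∃ C, 0 ≤ C ∧ ∀ x, |c + L (x - q)| ≤ C * (1 + ∑ i, |x i|) := by
  refine ⟨|c| + ‖L‖ * ‖q‖ + ‖L‖, by positivity, fun x => ?_⟩
  have h1 : |L (x - q)| ≤ ‖L‖ * ‖x - q‖ := L.le_opNorm _
  have h2 : ‖x - q‖ ≤ ‖x‖ + ‖q‖ := norm_sub_le _ _
  have h3 : ‖x‖ ≤ ∑ i, |x i| := norm_le_sum_abs x
  have h4 : 0 ≤ ∑ i, |x i| := Finset.sum_nonneg fun i _ => abs_nonneg _
  have h5 : |c + L (x - q)| ≤ |c| + |L (x - q)| := abs_add_le _ _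
  nlinarith [norm_nonneg L, norm_nonneg q, norm_nonneg x, abs_nonneg c,
    mul_le_mul_of_nonneg_left h2 (norm_nonneg L), mul_le_mul_of_nonneg_left h3 (norm_nonneg L),
    mul_nonneg (abs_nonneg c) h4, mul_nonneg (mul_nonneg (norm_nonneg L) (norm_nonneg q)) h4]

end Approx

/-- Convex order for probability measures on ℝ. -/
def ConvexOrder1 (μ ν : Measure ℝ) : Prop :=
  ∀ f : ℝ → ℝ, ConvexOn ℝ Set.univ f → Integrable f μ → Integrable f ν →
    ∫ x, f x ∂μ ≤ ∫ x, f x ∂ν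

/-- Convex order for probability measures on ℝ^d. -/
def ConvexOrderD (d : ℕ) (μ ν : Measure (Fin d → ℝ)) : Prop :=
  ∀ f : (Fin d → ℝ) → ℝ, ConvexOn ℝ Set.univ f → Integrable f μ → Integrable f ν →
    ∫ x, f x ∂μ ≤ ∫ x, f x ∂ν

lemma core : ∀ (d : ℕ) (μ ν : Fin d → Measure ℝ),
    (∀ i, IsProbabilityMeasure (μ i)) → (∀ i, IsProbabilityMeasure (ν i)) →
    (∀ i, Integrable id (μ i)) → (∀ i, Integrable id (ν i)) →
    (∀ i, ConvexOrder1 (μ i) (ν i)) →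
    ∀ (f : (Fin d → ℝ) → ℝ) (c : ℝ), ConvexOn ℝ Set.univ f →
      (∀ x, |f x| ≤ c * (1 + ∑ i, |x i|)) →
      ∫ x, f x ∂Measure.pi μ ≤ ∫ x, f x ∂Measure.pi ν := by
  intro d
  induction d with
  | zero =>
    intro μ ν hμp hνp _ _ _ f c _ _
    haveI := hμp; haveI := hνp
    rw [integral_unique, integral_unique]
    simp
  | succ d ih =>
    intro μ ν hμp hνp hμm hνm hord f c hconv hbd
    haveI := hμp; haveI := hνp
    -- basic facts
    have hc : Continuous f := by
      have := hconv.continuousOn isOpen_univ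
      rwa [continuousOn_univ] at this
    have hc0 : 0 ≤ c := by
      have := hbd 0
      simp only [Pi.zero_apply, abs_zero, Finset.sum_const_zero, add_zero, mul_one] at this
      linarith [abs_nonneg (f 0)]
    -- tail measures
    set tμ : Fin d → Measure ℝ := fun j => μ (Fin.succAbove 0 j) with htμ
    set tν : Fin d → Measure ℝ := fun j => ν (Fin.succAbove 0 j) with htν
    haveI : ∀ j, IsProbabilityMeasure (tμ j) := fun j => hμp _
    haveI : ∀ j, IsProbabilityMeasure (tν j) := fun j => hνp _
    set M := Measure.pi tμ with hM
    set N := Measure.pi tν with hN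
    haveI : IsProbabilityMeasure M := by rw [hM]; infer_instance
    haveI : IsProbabilityMeasure N := by rw [hN]; infer_instance
    set K : ℝ → (Fin d → ℝ) → ℝ := fun t y => f (Fin.cons t y) with hK
    -- bound on K
    have hKbd : ∀ t y, |K t y| ≤ c * (1 + |t|) * (1 + ∑ j, |y j|) := by
      intro t y
      have h1 := hbd (Fin.cons t y)
      have h2 : ∑ i : Fin (d+1), |Fin.cons t y i| = |t| + ∑ j, |y j| := by
        rw [Fin.sum_univ_succ]; simp
      rw [h2] at h1
      have hs : 0 ≤ ∑ j, |y j| := Finset.sum_nonneg fun j _ => abs_nonneg _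
      show |f (Fin.cons t y)| ≤ _
      nlinarith [abs_nonneg t, mul_nonneg (mul_nonneg hc0 (abs_nonneg t)) hs]
    have hKbd' : ∀ t y, |K t y| ≤ c * (1 + ∑ j, |y j|) * (1 + |t|) := by
      intro t y; rw [mul_right_comm]; exact hKbd t y
    -- continuity of slices
    have hKcont1 : ∀ t, Continuous (K t) := by
      intro t
      exact (continuous_consf f hc).comp (Continuous.prodMk_right t)
    have hKcont2 : ∀ y, Continuous (fun t => K t y) := by
      intro y
      exact (continuous_consf f hc).comp (continuous_id.prodMk continuous_const)
    -- integrability of slices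
    have hKtM : ∀ t, Integrable (K t) M :=
      fun t => integrable_lingrowth tμ (fun j => hμp _) (fun j => hμm _) (K t) (hKcont1 t)
        (c * (1 + |t|)) (fun y => hKbd t y)
    have hKtN : ∀ t, Integrable (K t) N :=
      fun t => integrable_lingrowth tν (fun j => hνp _) (fun j => hνm _) (K t) (hKcont1 t)
        (c * (1 + |t|)) (fun y => hKbd t y)
    have hKyμ : ∀ y, Integrable (fun t => K t y) (μ 0) :=
      fun y => integrable_lingrowth1 (μ 0) (hμp 0) (hμm 0) _ (hKcont2 y)
        (c * (1 + ∑ j, |y j|)) (fun t => hKbd' t y)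
    have hKyν : ∀ y, Integrable (fun t => K t y) (ν 0) :=
      fun y => integrable_lingrowth1 (ν 0) (hνp 0) (hνm 0) _ (hKcont2 y)
        (c * (1 + ∑ j, |y j|)) (fun t => hKbd' t y)
    -- joint integrability on products
    have hjoint : ∀ (ρ : Measure ℝ) (τ : Fin d → Measure ℝ),
        IsProbabilityMeasure ρ → (∀ j, IsProbabilityMeasure (τ j)) →
        Integrable id ρ → (∀ j, Integrable id (τ j)) →
        Integrable (Function.uncurry K) (ρ.prod (Measure.pi τ)) := by
      intro ρ τ hρp hτp hρm hτm
      haveI := hρp; haveI := hτp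
      haveI : IsProbabilityMeasure (Measure.pi τ) := inferInstance
      have hbound : Integrable
          (fun p : ℝ × (Fin d → ℝ) => c * (1 + |p.1| + ∑ j, |p.2 j|)) (ρ.prod (Measure.pi τ)) := by
        refine Integrable.const_mul ?_ c
        refine Integrable.add ?_ ?_
        · exact (integrable_const (1:ℝ)).add (integrable_fst_abs ρ (Measure.pi τ) hρm)
        · refine integrable_snd_comp ρ (Measure.pi τ) (g := fun y : Fin d → ℝ => ∑ j, |y j|) ?_ ?_
          · exact (continuous_finset_sum _ fun j _ => (continuous_apply j).abs).aestronglyMeasurable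
          · exact integrable_finset_sum _ fun j _ => (integrable_coord τ hτp hτm j).abs
      refine hbound.mono' ?_ (Filter.Eventually.of_forall fun p => ?_)
      · exact (continuous_consf f hc).aestronglyMeasurable
      · have h1 := hbd (Fin.cons p.1 p.2)
        have h2 : ∑ i : Fin (d+1), |Fin.cons p.1 p.2 i| = |p.1| + ∑ j, |p.2 j| := by
          rw [Fin.sum_univ_succ]; simp
        rw [h2] at h1
        simpa [Function.uncurry, Real.norm_eq_abs, mul_add, add_assoc] using h1
    -- the function g
    set g : ℝ → ℝ := fun t => ∫ y, K t y ∂M with hg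
    have hgconv : ConvexOn ℝ Set.univ g := by
      refine ⟨convex_univ, ?_⟩
      intro t1 _ t2 _ a b ha hb hab
      have hpt : ∀ y, K (a * t1 + b * t2) y ≤ a * K t1 y + b * K t2 y := by
        intro y
        have hcomb := hconv.2 (Set.mem_univ (Fin.cons t1 y : Fin (d+1) → ℝ))
          (Set.mem_univ (Fin.cons t2 y : Fin (d+1) → ℝ)) ha hb hab
        have hy : a • y + b • y = y := by
          rw [← add_smul, hab, one_smul]
        have := cons_affine a b t1 t2 y y
        rw [hy] at this
        rw [hK]
        simp only []
        rw [this]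
        simpa [smul_eq_mul] using hcomb
      have hcomb2 : Integrable (fun y => a * K t1 y + b * K t2 y) M :=
        ((hKtM t1).const_mul a).add ((hKtM t2).const_mul b)
      calc g (a * t1 + b * t2) ≤ ∫ y, (a * K t1 y + b * K t2 y) ∂M :=
            integral_mono (hKtM _) hcomb2 hpt
      _ = a * g t1 + b * g t2 := by
            rw [integral_add ((hKtM t1).const_mul a) ((hKtM t2).const_mul b),
              integral_const_mul, integral_const_mul]
      _ = a • g t1 + b • g t2 := by simp [smul_eq_mul]
    -- growth bound for g
    have hsumM : Integrable (fun y : Fin d → ℝ => ∑ j, |y j|) M :=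
      integrable_finset_sum _ fun j _ => (integrable_coord tμ (fun j => hμp _) (fun j => hμm _) j).abs
    set SM := ∫ y, (∑ j, |y j|) ∂M with hSM
    have hSMnn : 0 ≤ SM := integral_nonneg fun y => Finset.sum_nonneg fun j _ => abs_nonneg _
    have hgbd : ∀ t, |g t| ≤ (c * (1 + SM)) * (1 + |t|) := by
      intro t
      have h1 : |g t| ≤ ∫ y, |K t y| ∂M := by
        simpa [Real.norm_eq_abs] using norm_integral_le_integral_norm (fun y => K t y) (μ := M)
      have h2 : ∫ y, |K t y| ∂M ≤ ∫ y, c * (1 + |t|) * (1 + ∑ j, |y j|) ∂M := by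
        refine integral_mono (hKtM t).abs ?_ (fun y => hKbd t y)
        exact ((integrable_const (1:ℝ)).add hsumM).const_mul _
      have h3 : ∫ y, c * (1 + |t|) * (1 + ∑ j, |y j|) ∂M = c * (1 + |t|) * (1 + SM) := by
        rw [integral_const_mul, integral_add (integrable_const (1:ℝ)) hsumM]
        simp [hSM]
      rw [h3] at h2
      calc |g t| ≤ c * (1 + |t|) * (1 + SM) := le_trans h1 h2
      _ = (c * (1 + SM)) * (1 + |t|) := by ring
    have hgcont : Continuous g := by
      have := hgconv.continuousOn isOpen_univ
      rwa [continuousOn_univ] at this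
    have hgμ : Integrable g (μ 0) :=
      integrable_lingrowth1 (μ 0) (hμp 0) (hμm 0) g hgcont _ hgbd
    have hgν : Integrable g (ν 0) :=
      integrable_lingrowth1 (ν 0) (hνp 0) (hνm 0) g hgcont _ hgbd
    have step1 : ∫ t, g t ∂(μ 0) ≤ ∫ t, g t ∂(ν 0) := hord 0 g hgconv hgμ hgν
    -- the function h
    set h : (Fin d → ℝ) → ℝ := fun y => ∫ t, K t y ∂(ν 0) with hh
    have hhconv : ConvexOn ℝ Set.univ h := by
      refine ⟨convex_univ, ?_⟩
      intro y1 _ y2 _ a b ha hb hab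
      have hpt : ∀ t, K t (a • y1 + b • y2) ≤ a * K t y1 + b * K t y2 := by
        intro t
        have hcomb := hconv.2 (Set.mem_univ (Fin.cons t y1 : Fin (d+1) → ℝ))
          (Set.mem_univ (Fin.cons t y2 : Fin (d+1) → ℝ)) ha hb hab
        have ht : a * t + b * t = t := by rw [← add_mul, hab, one_mul]
        have := cons_affine a b t t y1 y2
        rw [ht] at this
        rw [hK]
        simp only []
        rw [this]
        simpa [smul_eq_mul] using hcomb
      have hcomb2 : Integrable (fun t => a * K t y1 + b * K t y2) (ν 0) :=
        ((hKyν y1).const_mul a).add ((hKyν y2).const_mul b)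
      calc h (a • y1 + b • y2) ≤ ∫ t, (a * K t y1 + b * K t y2) ∂(ν 0) :=
            integral_mono (hKyν _) hcomb2 hpt
      _ = a * h y1 + b * h y2 := by
            rw [integral_add ((hKyν y1).const_mul a) ((hKyν y2).const_mul b),
              integral_const_mul, integral_const_mul]
      _ = a • h y1 + b • h y2 := by simp [smul_eq_mul]
    have habs : Integrable (fun t : ℝ => |t|) (ν 0) := by simpa using (hνm 0).abs
    set Sν := ∫ t, |t| ∂(ν 0) with hSν
    have hSνnn : 0 ≤ Sν := integral_nonneg fun t => abs_nonneg _
    have hhbd : ∀ y, |h y| ≤ (c * (1 + Sν)) * (1 + ∑ j, |y j|) := by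
      intro y
      have h1 : |h y| ≤ ∫ t, |K t y| ∂(ν 0) := by
        simpa [Real.norm_eq_abs] using norm_integral_le_integral_norm (fun t => K t y) (μ := ν 0)
      have h2 : ∫ t, |K t y| ∂(ν 0) ≤ ∫ t, c * (1 + ∑ j, |y j|) * (1 + |t|) ∂(ν 0) := by
        refine integral_mono (hKyν y).abs ?_ (fun t => hKbd' t y)
        exact ((integrable_const (1:ℝ)).add habs).const_mul _
      have h3 : ∫ t, c * (1 + ∑ j, |y j|) * (1 + |t|) ∂(ν 0) = c * (1 + ∑ j, |y j|) * (1 + Sν) := by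
        rw [integral_const_mul, integral_add (integrable_const (1:ℝ)) habs]
        simp [hSν]
      rw [h3] at h2
      calc |h y| ≤ c * (1 + ∑ j, |y j|) * (1 + Sν) := le_trans h1 h2
      _ = (c * (1 + Sν)) * (1 + ∑ j, |y j|) := by ring
    have step2 : ∫ y, h y ∂M ≤ ∫ y, h y ∂N :=
      ih tμ tν (fun j => hμp _) (fun j => hνp _) (fun j => hμm _) (fun j => hνm _)
        (fun j => hord _) h (c * (1 + Sν)) hhconv hhbd
    -- Fubini identifications
    have hFμ : ∫ x, f x ∂Measure.pi μ = ∫ t, g t ∂(μ 0) := by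
      rw [integral_pi_succ μ hμp f]
      exact integral_prod _ (hjoint (μ 0) tμ (hμp 0) (fun j => hμp _) (hμm 0) (fun j => hμm _))
    have hFν : ∫ x, f x ∂Measure.pi ν = ∫ t, (∫ y, K t y ∂N) ∂(ν 0) := by
      rw [integral_pi_succ ν hνp f]
      exact integral_prod _ (hjoint (ν 0) tν (hνp 0) (fun j => hνp _) (hνm 0) (fun j => hνm _))
    have hswap1 : ∫ t, g t ∂(ν 0) = ∫ y, h y ∂M :=
      integral_integral_swap (hjoint (ν 0) tμ (hνp 0) (fun j => hμp _) (hνm 0) (fun j => hμm _))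
    have hswap2 : ∫ y, h y ∂N = ∫ t, (∫ y, K t y ∂N) ∂(ν 0) :=
      (integral_integral_swap (hjoint (ν 0) tν (hνp 0) (fun j => hνp _) (hνm 0) (fun j => hνm _))).symm
    rw [hFμ, hFν, ← hswap2]
    exact le_trans step1 (le_trans (le_of_eq hswap1) step2)


/-- Coordinatewise convex order of one-dimensional marginals implies convex order
of the product measures on ℝ^d. -/
theorem product_convex_order (d : ℕ) (hd : 1 ≤ d)
    (μ ν : Fin d → Measure ℝ)
    (hμ : ∀ i, IsProbabilityMeasure (μ i)) (hν : ∀ i, IsProbabilityMeasure (ν i))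
    (hμm : ∀ i, Integrable id (μ i)) (hνm : ∀ i, Integrable id (ν i))
    (hord : ∀ i, ConvexOrder1 (μ i) (ν i)) :
    ConvexOrderD d (Measure.pi μ) (Measure.pi ν) := by
  intro f hconv hintμ hintν
  haveI := hμ; haveI := hν
  have hc : Continuous f := by
    have := hconv.continuousOn isOpen_univ
    rwa [continuousOn_univ] at this
  set q : ℕ → (Fin d → ℝ) := TopologicalSpace.denseSeq (Fin d → ℝ) with hqdef
  have hq : DenseRange q := TopologicalSpace.denseRange_denseSeq (Fin d → ℝ)
  have hsub : ∀ n : ℕ, ∃ L : (Fin d → ℝ) →L[ℝ] ℝ, ∀ y, f (q n) + L (y - q n) ≤ f y :=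
    fun n => exists_subgradient f hconv hc (q n)
  choose L hL using hsub
  set ℓ : ℕ → (Fin d → ℝ) → ℝ := fun n y => f (q n) + L n (y - q n) with hℓdef
  have hℓconv : ∀ n, ConvexOn ℝ Set.univ (ℓ n) := fun n => affine_convexOn (L n) (q n) _
  have hℓbd : ∀ n, ∃ C, 0 ≤ C ∧ ∀ x, |ℓ n x| ≤ C * (1 + ∑ i, |x i|) :=
    fun n => affine_bd (L n) (q n) _
  have hℓcont : ∀ n, Continuous (ℓ n) := fun n =>
    continuous_const.add ((L n).continuous.comp (continuous_id.sub continuous_const))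
  set F : ℕ → (Fin d → ℝ) → ℝ :=
    fun n => Nat.rec (ℓ 0) (fun k Fk => fun x => max (Fk x) (ℓ (k+1) x)) n with hFdef
  have hFsucc : ∀ k x, F (k+1) x = max (F k x) (ℓ (k+1) x) := fun k x => rfl
  have hFle : ∀ n x, F n x ≤ f x := by
    intro n
    induction n with
    | zero => exact fun x => hL 0 x
    | succ k ihk => intro x; rw [hFsucc]; exact max_le (ihk x) (hL (k+1) x)
  have hFmono : ∀ x, Monotone (fun n => F n x) := by
    intro x
    refine monotone_nat_of_le_succ fun k => ?_
    rw [hFsucc]; exact le_max_left _ _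
  have hFge : ∀ n x, ℓ n x ≤ F n x := by
    intro n
    induction n with
    | zero => exact fun x => le_refl _
    | succ k _ => intro x; rw [hFsucc]; exact le_max_right _ _
  have hFge0 : ∀ n x, ℓ 0 x ≤ F n x := fun n x =>
    le_trans (hFge 0 x) (hFmono x (Nat.zero_le n))
  have hFconv : ∀ n, ConvexOn ℝ Set.univ (F n) := by
    intro n
    induction n with
    | zero => exact hℓconv 0
    | succ k ihk =>
      have hsup := ihk.sup (hℓconv (k+1))
      have heq : (F k ⊔ ℓ (k+1)) = F (k+1) := by
        funext x
        simp [hFsucc, Pi.sup_apply, max_def]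
      rwa [heq] at hsup
  have hFbd : ∀ n, ∃ C, 0 ≤ C ∧ ∀ x, |F n x| ≤ C * (1 + ∑ i, |x i|) := by
    intro n
    induction n with
    | zero => exact hℓbd 0
    | succ k ihk =>
      obtain ⟨C1, h1n, h1⟩ := ihk
      obtain ⟨C2, h2n, h2⟩ := hℓbd (k+1)
      refine ⟨C1 + C2, by linarith, fun x => ?_⟩
      rw [hFsucc]
      have hs : 0 ≤ 1 + ∑ i, |x i| :=
        add_nonneg zero_le_one (Finset.sum_nonneg fun i _ => abs_nonneg _)
      calc |max (F k x) (ℓ (k+1) x)| ≤ max |F k x| |ℓ (k+1) x| := abs_max_le_max_abs_abs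
      _ ≤ (C1 + C2) * (1 + ∑ i, |x i|) := by
          refine max_le ?_ ?_
          · nlinarith [h1 x, mul_nonneg h2n hs]
          · nlinarith [h2 x, mul_nonneg h1n hs]
  have hFcont : ∀ n, Continuous (F n) := by
    intro n
    have := (hFconv n).continuousOn isOpen_univ
    rwa [continuousOn_univ] at this
  have htend : ∀ x, Filter.Tendsto (fun n => F n x) Filter.atTop (nhds (f x)) := by
    intro x
    refine tendsto_order.2 ⟨?_, ?_⟩
    · intro a ha
      have hcont2 : Continuous (fun z : Fin d → ℝ => 2 * f z - f ((2:ℝ) • z - x)) :=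
        (continuous_const.mul hc).sub
          (hc.comp ((continuous_id.const_smul (2:ℝ)).sub continuous_const))
      have hUopen : IsOpen {z : Fin d → ℝ | a < 2 * f z - f ((2:ℝ) • z - x)} :=
        isOpen_lt continuous_const hcont2
      have hxx : (2:ℝ) • x - x = x := by
        rw [two_smul]; abel
      have hxU : x ∈ {z : Fin d → ℝ | a < 2 * f z - f ((2:ℝ) • z - x)} := by
        simp only [Set.mem_setOf_eq, hxx]
        linarith
      obtain ⟨m, hm⟩ := hq.exists_mem_open hUopen ⟨x, hxU⟩
      refine Filter.eventually_atTop.2 ⟨m, fun n hn => ?_⟩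
      have h2 := hL m ((2:ℝ) • q m - x)
      have h3 : ((2:ℝ) • q m - x) - q m = -(x - q m) := by
        rw [two_smul]; abel
      rw [h3, map_neg] at h2
      have h1 : 2 * f (q m) - f ((2:ℝ) • q m - x) ≤ ℓ m x := by
        show _ ≤ f (q m) + L m (x - q m)
        linarith
      have hm' : a < 2 * f (q m) - f ((2:ℝ) • q m - x) := hm
      calc a < 2 * f (q m) - f ((2:ℝ) • q m - x) := hm'
      _ ≤ ℓ m x := h1
      _ ≤ F m x := hFge m x
      _ ≤ F n x := hFmono x hn
    · intro a ha
      exact Filter.Eventually.of_forall fun n => lt_of_le_of_lt (hFle n x) ha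
  obtain ⟨C0, hC0nn, hC0⟩ := hℓbd 0
  have hℓ0intμ : Integrable (ℓ 0) (Measure.pi μ) :=
    integrable_lingrowth μ hμ hμm _ (hℓcont 0) C0 hC0
  have hℓ0intν : Integrable (ℓ 0) (Measure.pi ν) :=
    integrable_lingrowth ν hν hνm _ (hℓcont 0) C0 hC0
  set bound : (Fin d → ℝ) → ℝ := fun x => |f x| + |ℓ 0 x| with hbddef
  have hboundμ : Integrable bound (Measure.pi μ) := hintμ.abs.add hℓ0intμ.abs
  have hboundν : Integrable bound (Measure.pi ν) := hintν.abs.add hℓ0intν.abs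
  have habsF : ∀ n x, ‖F n x‖ ≤ bound x := by
    intro n x
    rw [Real.norm_eq_abs, abs_le]
    constructor
    · have := hFge0 n x
      have h4 := neg_abs_le (ℓ 0 x)
      have h5 := abs_nonneg (f x)
      simp only [hbddef]
      linarith
    · have := hFle n x
      have h4 := le_abs_self (f x)
      have h5 := abs_nonneg (ℓ 0 x)
      simp only [hbddef]
      linarith
  have htμ : Filter.Tendsto (fun n => ∫ x, F n x ∂Measure.pi μ) Filter.atTop
      (nhds (∫ x, f x ∂Measure.pi μ)) :=
    tendsto_integral_of_dominated_convergence bound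
      (fun n => (hFcont n).aestronglyMeasurable) hboundμ
      (fun n => Filter.Eventually.of_forall (habsF n))
      (Filter.Eventually.of_forall htend)
  have htν : Filter.Tendsto (fun n => ∫ x, F n x ∂Measure.pi ν) Filter.atTop
      (nhds (∫ x, f x ∂Measure.pi ν)) :=
    tendsto_integral_of_dominated_convergence bound
      (fun n => (hFcont n).aestronglyMeasurable) hboundν
      (fun n => Filter.Eventually.of_forall (habsF n))
      (Filter.Eventually.of_forall htend)
  refine le_of_tendsto_of_tendsto' htμ htν fun n => ?_
  obtain ⟨C, hCnn, hC⟩ := hFbd n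
  exact core d μ ν hμ hν hμm hνm hord (F n) C (hFconv n) hC
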